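/- Let t be a rooted tree with pairwise distinct leaf labels, S a set of labels, and a a leaf label of t with a ∉ S. Then every vertex v of t with a ∈ L(v) is not complete with respect to S, i.e., counter_S(v) < |L(v)| for every ancestor v of the leaf labeled a (including that leaf itself). -/

import Mathlib

inductive RTree (α : Type*) where
  | leaf (a : α)
  | node (children : List (RTree α))

namespace RTree

variable {α : Type*} [DecidableEq α]

/-- The list of leaf labels of a tree. -/
def leafList : RTree α → List α
  | leaf a => [a]
  | node cs => (cs.attach.map fun ⟨w, _⟩ => leafList w).flatten
decreasing_by have := List.sizeOf_lt_of_mem ‹_›; simp only [node.sizeOf_spec]; omega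

/-- `L v` is the finite set of labels of leaves in the subtree rooted at `v`. -/
def L (v : RTree α) : Finset α := (leafList v).toFinset

/-- The counter function. -/
def counter (S : Finset α) : RTree α → ℕ
  | leaf a => if a ∈ S then 1 else 0
  | node cs =>
      (cs.attach.map fun ⟨w, _⟩ =>
        if counter S w = (L w).card then counter S w else 0).sum
decreasing_by have := List.sizeOf_lt_of_mem ‹_›; simp only [node.sizeOf_spec]; omega

/-- `IsVertex v t` means that `v` is a vertex (subtree) of `t`. -/
inductive IsVertex : RTree α → RTree α → Prop
  | refl (t : RTree α) : IsVertex t t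
  | child {v w : RTree α} {cs : List (RTree α)} : w ∈ cs → IsVertex v w → IsVertex v (node cs)

/-- The list of all vertices (subtrees) of a tree. -/
def vertexList : RTree α → List (RTree α)
  | leaf a => [leaf a]
  | node cs => node cs :: (cs.attach.map fun ⟨w, _⟩ => vertexList w).flatten
decreasing_by have := List.sizeOf_lt_of_mem ‹_›; simp only [node.sizeOf_spec]; omega



lemma leafList_node (cs : List (RTree α)) :
    leafList (node cs) = (cs.map leafList).flatten := by
  rw [leafList]
  congr 1
  rw [← List.attach_map_val (l := cs) (f := leafList)]

lemma counter_node (S : Finset α) (cs : List (RTree α)) :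
    counter S (node cs) =
      (cs.map fun w => if counter S w = (L w).card then counter S w else 0).sum := by
  rw [counter]
  congr 1
  rw [← List.attach_map_val (l := cs) (f := fun w => if counter S w = (L w).card then counter S w else 0)]

lemma nodup_child {cs : List (RTree α)} {w : RTree α}
    (hnd : (leafList (node cs)).Nodup) (hw : w ∈ cs) : (leafList w).Nodup := by
  rw [leafList_node] at hnd
  exact hnd.sublist (List.sublist_flatten_of_mem (List.mem_map_of_mem (f := leafList) hw))

lemma card_L_node {cs : List (RTree α)} (hnd : (leafList (node cs)).Nodup) :
    (L (node cs)).card = (cs.map fun w => (L w).card).sum := by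
  have h1 : (L (node cs)).card = (leafList (node cs)).length :=
    List.toFinset_card_of_nodup hnd
  rw [h1, leafList_node, List.length_flatten, List.map_map]
  congr 1
  apply List.map_congr_left
  intro w hw
  exact (List.toFinset_card_of_nodup (nodup_child hnd hw)).symm

lemma nodup_of_isVertex : ∀ {v t : RTree α}, IsVertex v t →
    (leafList t).Nodup → (leafList v).Nodup := by
  intro v t hv
  induction hv with
  | refl => exact fun h => h
  | child hmem _ ih => exact fun h => ih (nodup_child h hmem)

theorem counter_lt {S : Finset α} {a : α} (haS : a ∉ S) :
    ∀ v : RTree α, (leafList v).Nodup → a ∈ leafList v → counter S v < (L v).card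
  | leaf b => by
    intro _ ha
    simp [leafList] at ha
    subst ha
    simp [counter, L, leafList, haS]
  | node cs => by
    intro hnd ha
    rw [leafList_node] at ha
    obtain ⟨l, hl, hal⟩ := List.mem_flatten.mp ha
    obtain ⟨w, hw, rfl⟩ := List.mem_map.mp hl
    rw [counter_node, card_L_node hnd]
    apply List.sum_lt_sum
    · intro u _
      split <;> omega
    · refine ⟨w, hw, ?_⟩
      have hcard : 0 < (L w).card :=
        Finset.card_pos.mpr ⟨a, List.mem_toFinset.mpr hal⟩
      have hlt := counter_lt haS w (nodup_child hnd hw) hal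
      split <;> omega
decreasing_by have := List.sizeOf_lt_of_mem hw; simp only [node.sizeOf_spec]; omega

/-- if `a` is a leaf label of `t` with `a ∉ S`, then every vertex `v` with
`a ∈ L(v)` (i.e. every ancestor of the leaf labeled `a`, including that leaf) is not complete
with respect to `S`: `counter_S(v) < |L(v)|`. -/
theorem not_complete_of_missing_leaf (t : RTree α) (hnd : t.leafList.Nodup)
    (S : Finset α) (a : α) (ha : a ∈ leafList t) (haS : a ∉ S) :
    ∀ v : RTree α, IsVertex v t → a ∈ L v → counter S v < (L v).card := by
  intro v hv haL
  exact counter_lt haS v (nodup_of_isVertex hv hnd) (List.mem_toFinset.mp haL)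


end RTree
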